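/- Let V be a finite-dimensional real vector space and let p, q be quadratic forms on V, each nondegenerate of index 1 (i.e. for each of p and q there exists a basis of V in which the form is diagonal with exactly one negative diagonal entry, the rest positive). Assume that the light cone of q lies inside the light cone of p, i.e. every nonzero v ∈ V with q(v) ≤ 0 satisfies p(v) < 0. Then p and q can be simultaneously diagonalized: there exists a basis (b i) of V such that the associated symmetric bilinear forms of p and of q both vanish on every pair (b i, b j) with i ≠ j. -/

import Mathlib

open QuadraticMap Module Filter Topology

section Aux

lemma diag_repr {V : Type*} [AddCommGroup V] [Module ℝ V] {n : ℕ}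
    (p : QuadraticForm ℝ V) (b : Basis (Fin n) ℝ V)
    (h : ∀ i j, i ≠ j → polar p (b i) (b j) = 0) (v : V) :
    p v = ∑ i, (b.repr v i)^2 * p (b i) := by
  conv_lhs => rw [← b.sum_repr v]
  rw [QuadraticMap.map_sum]
  have h2 : ∀ ij ∈ Finset.univ.sym2.filter (fun ij : Sym2 (Fin n) => ¬ ij.IsDiag),
      Sym2.lift ⟨fun i j => polar p (b.repr v i • b i) (b.repr v j • b j),
        fun _ _ => polar_comm _ _ _⟩ ij = 0 := by
    intro ij hij
    induction ij using Sym2.ind with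
    | _ i j =>
      simp only [Finset.mem_filter, Sym2.isDiag_iff_proj_eq] at hij
      simp [polar_smul_left, polar_smul_right, h i j hij.2]
  rw [Finset.sum_eq_zero (fun (ij : Sym2 (Fin n)) hij => by induction ij using Sym2.ind with | _ i j => exact h2 _ hij), add_zero]
  refine Finset.sum_congr rfl fun i _ => ?_
  rw [QuadraticMap.map_smul, smul_eq_mul]
  ring

lemma map_add_polar {V : Type*} [AddCommGroup V] [Module ℝ V]
    (p : QuadraticForm ℝ V) (x y : V) : p (x + y) = p x + p y + polar p x y := by
  simp [polar]

lemma qf_continuous {n : ℕ} (P : QuadraticForm ℝ (Fin n → ℝ)) : Continuous P := by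
  set B := polarBilin P with hB
  set e : Fin n → (Fin n → ℝ) := fun i j => if i = j then (1:ℝ) else 0 with he
  have hrep : ∀ x : Fin n → ℝ, P x = (∑ i, ∑ j, x i * x j * B (e i) (e j)) / 2 := by
    intro x
    have h2 : B x x = 2 * P x := by
      rw [hB, polarBilin_apply_apply, polar_self]; push_cast; ring
    have hfst : ∀ y, B x y = ∑ i, x i * B (e i) y := by
      intro y
      conv_lhs => rw [pi_eq_sum_univ x, map_sum]
      rw [LinearMap.sum_apply]
      exact Finset.sum_congr rfl fun i _ => by
        rw [_root_.map_smul, LinearMap.smul_apply, smul_eq_mul]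
    have hsnd : ∀ i, B (e i) x = ∑ j, x j * B (e i) (e j) := by
      intro i
      conv_lhs => rw [pi_eq_sum_univ x, map_sum]
      exact Finset.sum_congr rfl fun j _ => by rw [_root_.map_smul, smul_eq_mul]
    have h3 : B x x = ∑ i, ∑ j, x i * x j * B (e i) (e j) := by
      rw [hfst x]
      refine Finset.sum_congr rfl fun i _ => ?_
      rw [hsnd i, Finset.mul_sum]
      exact Finset.sum_congr rfl fun j _ => by ring
    rw [← h3, h2]; ring
  have : Continuous fun x : Fin n → ℝ => (∑ i, ∑ j, x i * x j * B (e i) (e j)) / 2 := by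
    refine Continuous.div_const ?_ 2
    refine continuous_finset_sum _ fun i _ => continuous_finset_sum _ fun j _ => ?_
    exact ((continuous_apply i).mul (continuous_apply j)).mul continuous_const
  have heq : ⇑P = fun x => (∑ i, ∑ j, x i * x j * B (e i) (e j)) / 2 := funext hrep
  rw [heq]; exact this

lemma exists_critical_E {n : ℕ} (P Q : QuadraticForm ℝ (Fin n → ℝ))
    (hneg : ∃ v, Q v < 0) (hcone : ∀ v, v ≠ 0 → Q v ≤ 0 → P v < 0) :
    ∃ x₀, Q x₀ < 0 ∧ P x₀ < 0 ∧ ∀ y, P x₀ * polar Q x₀ y = Q x₀ * polar P x₀ y := by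
  have hPc := qf_continuous P
  have hQc := qf_continuous Q
  obtain ⟨v, hv⟩ := hneg
  have hv0 : v ≠ 0 := by rintro rfl; simp at hv
  set u : Fin n → ℝ := ‖v‖⁻¹ • v with hu
  have hun : ‖u‖ = 1 := norm_smul_inv_norm hv0
  have hQu : Q u < 0 := by
    rw [hu, QuadraticMap.map_smul, smul_eq_mul]
    have hvn : 0 < ‖v‖ := norm_pos_iff.mpr hv0
    have : 0 < ‖v‖⁻¹ * ‖v‖⁻¹ := by positivity
    exact mul_neg_of_pos_of_neg this hv
  set C : Set (Fin n → ℝ) := Metric.sphere 0 1 ∩ {x | Q x ≤ 0} with hC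
  have hCc : IsCompact C := (isCompact_sphere 0 1).inter_right (isClosed_le hQc continuous_const)
  have huC : u ∈ C := by
    constructor
    · simpa [Metric.mem_sphere, dist_zero_right] using hun
    · exact le_of_lt hQu
  have hne0 : ∀ x ∈ C, x ≠ 0 := by
    rintro x ⟨hx1, _⟩ rfl
    simp at hx1
  have hPneg : ∀ x ∈ C, P x < 0 := fun x hx => hcone x (hne0 x hx) hx.2
  set g : (Fin n → ℝ) → ℝ := fun x => Q x / P x with hg
  have hgc : ContinuousOn g C :=
    ContinuousOn.div hQc.continuousOn hPc.continuousOn fun x hx => ne_of_lt (hPneg x hx)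
  obtain ⟨x₀, hx₀C, hmax⟩ := hCc.exists_isMaxOn ⟨u, huC⟩ hgc
  have hPu : P u < 0 := hPneg u huC
  have hgu : 0 < g u := div_pos_of_neg_of_neg hQu hPu
  have hg0 : 0 < g x₀ := lt_of_lt_of_le hgu (hmax huC)
  have hP0 : P x₀ < 0 := hPneg x₀ hx₀C
  have hQ0 : Q x₀ < 0 := by
    have hq2 : Q x₀ ≤ 0 := hx₀C.2
    rcases lt_or_eq_of_le hq2 with h | h
    · exact h
    · exfalso
      have : g x₀ = 0 := by rw [hg]; simp only; rw [h, zero_div]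
      rw [this] at hg0; exact lt_irrefl 0 hg0
  -- global maximality
  have hglob : ∀ w, Q w < 0 → g w ≤ g x₀ := by
    intro w hw
    have hw0 : w ≠ 0 := by rintro rfl; simp at hw
    set a : ℝ := ‖w‖⁻¹ with ha
    have ha0 : a ≠ 0 := inv_ne_zero (norm_ne_zero_iff.mpr hw0)
    have hmem : a • w ∈ C := by
      constructor
      · simpa [Metric.mem_sphere, dist_zero_right] using (norm_smul_inv_norm hw0 : ‖a • w‖ = 1)
      · rw [Set.mem_setOf_eq, QuadraticMap.map_smul, smul_eq_mul]
        exact le_of_lt (mul_neg_of_pos_of_neg (by positivity) hw)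
    have : g (a • w) = g w := by
      rw [hg]; simp only [QuadraticMap.map_smul, smul_eq_mul]
      rw [mul_div_mul_left _ _ (by positivity : a * a ≠ 0)]
    rw [← this]
    exact hmax hmem
  -- the quadratic form R
  set R : QuadraticForm ℝ (Fin n → ℝ) := P x₀ • Q - Q x₀ • P with hR
  have hRapp : ∀ w, R w = P x₀ * Q w - Q x₀ * P w := by
    intro w; rw [hR]; simp [smul_eq_mul]
  have hRle : ∀ w, Q w < 0 → R w ≤ 0 := by
    intro w hw
    have h1 := hglob w hw
    have hPw : P w < 0 := hcone w (by rintro rfl; simp at hw) (le_of_lt hw)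
    have hpp : (0:ℝ) < P w * P x₀ := mul_pos_of_neg_of_neg hPw hP0
    have hPw' : P w ≠ 0 := ne_of_lt hPw
    have hP0' : P x₀ ≠ 0 := ne_of_lt hP0
    have h2 := mul_le_mul_of_nonneg_right h1 (le_of_lt hpp)
    have h3 : Q w / P w * (P w * P x₀) = Q w * P x₀ := by field_simp
    have h4 : Q x₀ / P x₀ * (P w * P x₀) = Q x₀ * P w := by field_simp
    rw [hg] at h2; simp only at h2
    rw [h3, h4] at h2
    rw [hRapp]; linarith
  have hR0 : R x₀ = 0 := by rw [hRapp]; ring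
  -- polar of R
  have hRpolar : ∀ x y, polar R x y = P x₀ * polar Q x y - Q x₀ * polar P x y := by
    intro x y; simp only [polar, hRapp]; ring
  refine ⟨x₀, hQ0, hP0, fun y => ?_⟩
  -- show polar R x₀ y = 0
  suffices hA : polar R x₀ y = 0 by
    rw [hRpolar] at hA; linarith
  set A : ℝ := polar R x₀ y with hA
  set B : ℝ := R y with hBB
  have key : ∀ t : ℝ, Q (x₀ + t • y) < 0 → t * (A + t * B) ≤ 0 := by
    intro t ht
    have h5 : R (x₀ + t • y) = R x₀ + R (t • y) + polar R x₀ (t • y) := by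
      simp [polar]; try ring
    have h6 := hRle _ ht
    rw [h5, hR0, QuadraticMap.map_smul, smul_eq_mul] at h6
    have h7 : polar R x₀ (t • y) = t * A := by rw [hA, polar_smul_right, smul_eq_mul]
    rw [h7] at h6
    nlinarith
  -- t ↦ Q (x₀ + t • y) continuous, negative at 0
  have hψ : Continuous fun t : ℝ => Q (x₀ + t • y) :=
    hQc.comp (continuous_const.add (continuous_id.smul continuous_const))
  have hev : ∀ᶠ t in 𝓝 (0:ℝ), Q (x₀ + t • y) < 0 := by
    have h8 : Tendsto (fun t : ℝ => Q (x₀ + t • y)) (𝓝 0) (𝓝 (Q x₀)) := by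
      have := hψ.tendsto (0:ℝ)
      simpa using this
    exact h8.eventually_lt_const hQ0
  have htendA : ∀ l : Filter ℝ, l ≤ 𝓝 0 → Tendsto (fun t => A + t * B) l (𝓝 A) := by
    intro l hl
    have : Tendsto (fun t : ℝ => A + t * B) (𝓝 0) (𝓝 (A + 0 * B)) := by
      exact (continuous_const.add (continuous_id.mul continuous_const)).continuousAt
    simpa using this.mono_left hl
  have hAle : A ≤ 0 := by
    refine le_of_tendsto (htendA (𝓝[>] (0:ℝ)) nhdsWithin_le_nhds) ?_
    filter_upwards [hev.filter_mono nhdsWithin_le_nhds, self_mem_nhdsWithin] with t h1 h2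
    have h3 := key t h1
    have ht : (0:ℝ) < t := h2
    nlinarith
  have hAge : 0 ≤ A := by
    refine ge_of_tendsto (htendA (𝓝[<] (0:ℝ)) nhdsWithin_le_nhds) ?_
    filter_upwards [hev.filter_mono nhdsWithin_le_nhds, self_mem_nhdsWithin] with t h1 h2
    have h3 := key t h1
    have ht : t < (0:ℝ) := h2
    nlinarith
  linarith

lemma polar_comp_linear {V W : Type*} [AddCommGroup V] [Module ℝ V] [AddCommGroup W] [Module ℝ W]
    (p : QuadraticForm ℝ W) (f : V →ₗ[ℝ] W) (x y : V) :
    polar (p.comp f) x y = polar p (f x) (f y) := by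
  simp [polar, QuadraticMap.comp_apply, map_add]

lemma exists_critical {V : Type*} [AddCommGroup V] [Module ℝ V] [FiniteDimensional ℝ V]
    (p q : QuadraticForm ℝ V) (hneg : ∃ v, q v < 0)
    (hcone : ∀ v, v ≠ 0 → q v ≤ 0 → p v < 0) :
    ∃ v₀, q v₀ < 0 ∧ p v₀ < 0 ∧ ∀ w, p v₀ * polar q v₀ w = q v₀ * polar p v₀ w := by
  set n := finrank ℝ V
  set e : V ≃ₗ[ℝ] (Fin n → ℝ) := (Module.finBasis ℝ V).equivFun with he
  set P : QuadraticForm ℝ (Fin n → ℝ) := p.comp (e.symm : (Fin n → ℝ) →ₗ[ℝ] V) with hP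
  set Q : QuadraticForm ℝ (Fin n → ℝ) := q.comp (e.symm : (Fin n → ℝ) →ₗ[ℝ] V) with hQ
  have hPapp : ∀ x, P x = p (e.symm x) := fun x => rfl
  have hQapp : ∀ x, Q x = q (e.symm x) := fun x => rfl
  have hneg' : ∃ x, Q x < 0 := by
    obtain ⟨v, hv⟩ := hneg
    exact ⟨e v, by rw [hQapp]; simpa using hv⟩
  have hcone' : ∀ x, x ≠ 0 → Q x ≤ 0 → P x < 0 := by
    intro x hx hQx
    exact hcone (e.symm x) (by simpa using hx) hQx
  obtain ⟨x₀, hQ0, hP0, hcrit⟩ := exists_critical_E P Q hneg' hcone'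
  refine ⟨e.symm x₀, hQ0, hP0, fun w => ?_⟩
  have h1 := hcrit (e w)
  rw [hP, hQ] at h1
  rw [polar_comp_linear, polar_comp_linear] at h1
  simpa using h1

end Aux

/-- A quadratic form on a finite-dimensional real vector space is *nondegenerate of index 1*
if in some basis it is diagonal with exactly one negative and `dim V - 1` positive diagonal
entries. -/
def IsIndexOneForm {V : Type*} [AddCommGroup V] [Module ℝ V] [FiniteDimensional ℝ V]
    (p : QuadraticForm ℝ V) : Prop :=
  ∃ (b : Basis (Fin (Module.finrank ℝ V)) ℝ V) (i₀ : Fin (Module.finrank ℝ V)),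
    (∀ i j, i ≠ j → QuadraticMap.polar p (b i) (b j) = 0) ∧
    p (b i₀) < 0 ∧ ∀ i, i ≠ i₀ → 0 < p (b i)

lemma posdef_orthogonal {V : Type*} [AddCommGroup V] [Module ℝ V] [FiniteDimensional ℝ V]
    (p : QuadraticForm ℝ V) (hp : IsIndexOneForm p) (u w : V) (hu : p u < 0)
    (horth : polar p u w = 0) (hw : w ≠ 0) : 0 < p w := by
  by_contra hpw
  push_neg at hpw
  obtain ⟨b, i₀, hdiag, hneg, hpos⟩ := hp
  -- claim : if coord at i₀ is 0 and p x ≤ 0 then x = 0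
  have claim : ∀ x : V, b.repr x i₀ = 0 → p x ≤ 0 → x = 0 := by
    intro x hx hpx
    have hrep := diag_repr p b hdiag x
    have hterm : ∀ i ∈ Finset.univ, (0:ℝ) ≤ (b.repr x i)^2 * p (b i) := by
      intro i _
      rcases eq_or_ne i i₀ with rfl | hi
      · rw [hx]; simp
      · exact mul_nonneg (sq_nonneg _) (le_of_lt (hpos i hi))
    have hge : (0:ℝ) ≤ p x := hrep ▸ Finset.sum_nonneg hterm
    have hzero : p x = 0 := le_antisymm hpx hge
    have hall := (Finset.sum_eq_zero_iff_of_nonneg hterm).mp (by rw [← hrep, hzero])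
    have hcoord : ∀ i, b.repr x i = 0 := by
      intro i
      rcases eq_or_ne i i₀ with rfl | hi
      · exact hx
      · have := hall i (Finset.mem_univ i)
        have h1 : (b.repr x i)^2 = 0 := by
          by_contra h2
          exact (mul_ne_zero h2 (ne_of_gt (hpos i hi))) this
        exact pow_eq_zero_iff (by norm_num) |>.mp h1
    have : b.repr x = 0 := by ext i; exact hcoord i
    simpa using b.repr.map_eq_zero_iff.mp this
  -- now derive contradiction
  set a : ℝ := b.repr w i₀
  set c : ℝ := b.repr u i₀
  have hcu : c ≠ 0 := by
    intro h0
    have := claim u h0 (le_of_lt hu)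
    rw [this] at hu; simp at hu
  -- x := a • u - c • w  has coordinate 0 and p x ≤ 0
  set x : V := a • u - c • w with hxdef
  have hx0 : b.repr x i₀ = 0 := by
    simp [hxdef, a, c]; ring
  have hpx : p x ≤ 0 := by
    have : p x = a^2 * p u + c^2 * p w - a * c * polar p u w := by
      rw [hxdef, sub_eq_add_neg, map_add_polar, ← neg_one_smul ℝ (c • w), smul_smul,
        QuadraticMap.map_smul, QuadraticMap.map_smul, polar_smul_left, polar_smul_right]
      simp only [smul_eq_mul]
      ring
    rw [this, horth]
    have h1 : a^2 * p u ≤ 0 := mul_nonpos_of_nonneg_of_nonpos (sq_nonneg a) (le_of_lt hu)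
    have h2 : c^2 * p w ≤ 0 := mul_nonpos_of_nonneg_of_nonpos (sq_nonneg c) hpw
    linarith
  have hx : x = 0 := claim x hx0 hpx
  have hwu : a • u = c • w := by
    rwa [hxdef, sub_eq_zero] at hx
  -- then w = (a/c) • u, contradiction with polar = 0
  have hw2 : w = (a / c) • u := by
    have h3 : c⁻¹ • (a • u) = c⁻¹ • (c • w) := by rw [hwu]
    rw [smul_smul, smul_smul, inv_mul_cancel₀ hcu, one_smul] at h3
    rw [← h3, div_eq_inv_mul]
  have : polar p u w = (a/c) * (2 * p u) := by
    rw [hw2, polar_smul_right, polar_self, smul_eq_mul, nsmul_eq_mul]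
    push_cast; ring
  rw [horth] at this
  have ha : a = 0 := by
    rcases mul_eq_zero.mp this.symm with h | h
    · exact div_eq_zero_iff.mp h |>.resolve_right hcu
    · linarith
  apply hw
  rw [hw2, ha, zero_div, zero_smul]

/-- If `p` and `q` are nondegenerate quadratic forms of index 1 on a finite-dimensional real
vector space and the light cone of `q` lies inside the light cone of `p` (every nonzero `v`
with `q(v) ≤ 0` has `p(v) < 0`), then `p` and `q` are simultaneously diagonalizable. -/
theorem simultaneous_diagonalization_index_one (V : Type*) [AddCommGroup V] [Module ℝ V]
    [FiniteDimensional ℝ V] (p q : QuadraticForm ℝ V)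
    (hp : IsIndexOneForm p) (hq : IsIndexOneForm q)
    (hcone : ∀ v : V, v ≠ 0 → q v ≤ 0 → p v < 0) :
    ∃ b : Basis (Fin (Module.finrank ℝ V)) ℝ V, ∀ i j, i ≠ j →
      QuadraticMap.polar p (b i) (b j) = 0 ∧ QuadraticMap.polar q (b i) (b j) = 0 := by
  classical
  set n := Module.finrank ℝ V with hn
  -- q has a negative vector
  have hqneg : ∃ v, q v < 0 := by
    obtain ⟨bq, i₀, _, hneg, _⟩ := hq
    exact ⟨bq i₀, hneg⟩
  obtain ⟨v₀, hq0, hp0, hcrit⟩ := exists_critical p q hqneg hcone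
  set φ : V →ₗ[ℝ] ℝ := polarBilin p v₀ with hφ
  have hφapp : ∀ w, φ w = polar p v₀ w := fun w => rfl
  set W : Submodule ℝ V := LinearMap.ker φ with hW
  -- members of W are p- and q-orthogonal to v₀
  have hWp : ∀ w : W, polar p v₀ (w : V) = 0 := fun w => w.2
  have hWq : ∀ w : W, polar q v₀ (w : V) = 0 := by
    intro w
    have h1 := hcrit (w : V)
    rw [hWp w, mul_zero] at h1
    rcases mul_eq_zero.mp h1 with h | h
    · exact absurd h (ne_of_lt hp0)
    · exact h
  -- p and q are positive definite on W
  have hWppos : ∀ w : W, (w : V) ≠ 0 → 0 < p (w : V) :=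
    fun w hw => posdef_orthogonal p hp v₀ w hp0 (hWp w) hw
  have hWqpos : ∀ w : W, (w : V) ≠ 0 → 0 < q (w : V) :=
    fun w hw => posdef_orthogonal q hq v₀ w hq0 (hWq w) hw
  -- inner product structure on W from q
  letI cd : InnerProductSpace.Core ℝ W :=
    { inner := fun x y => polar q (x : V) (y : V) / 2
      conj_inner_symm := fun x y => by
        simp only [starRingEnd_apply, star_trivial]
        rw [polar_comm]
      re_inner_nonneg := fun x => by
        simp only [RCLike.re_to_real]
        rcases eq_or_ne (x : V) 0 with h | h
        · rw [show polar q (x:V) (x:V) = 2 • q (x:V) from polar_self _ _, h]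
          simp
        · rw [show polar q (x:V) (x:V) = 2 • q (x:V) from polar_self _ _]
          have := hWqpos x h
          simp only [nsmul_eq_mul, Nat.cast_ofNat]
          positivity
      add_left := fun x y z => by
        simp only [Submodule.coe_add]
        rw [polar_add_left, add_div]
      smul_left := fun x y r => by
        simp only [starRingEnd_apply, star_trivial, SetLike.val_smul]
        rw [polar_smul_left, smul_eq_mul]
        ring
      definite := fun x hx => by
        change polar q (x:V) (x:V) / 2 = 0 at hx
        have hq2 : q (x : V) = 0 := by
          rw [show polar q (x:V) (x:V) = 2 • q (x:V) from polar_self _ _] at hx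
          simp only [nsmul_eq_mul, Nat.cast_ofNat] at hx
          linarith [div_eq_zero_iff.mp hx]
        by_contra hx0
        have : (x : V) ≠ 0 := fun h => hx0 (by exact_mod_cast Subtype.ext h)
        exact absurd hq2 (ne_of_gt (hWqpos x this)) }
  letI : NormedAddCommGroup W := cd.toNormedAddCommGroup
  letI : InnerProductSpace ℝ W := InnerProductSpace.ofCore cd.toCore
  have hinner : ∀ x y : W, (inner ℝ x y : ℝ) = polar q (x : V) (y : V) / 2 := fun x y => rfl
  -- the symmetric operator T
  set Bq : LinearMap.BilinForm ℝ W := (polarBilin q).compl₁₂ W.subtype W.subtype with hBq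
  set Bp : LinearMap.BilinForm ℝ W := (polarBilin p).compl₁₂ W.subtype W.subtype with hBp
  have hBqapp : ∀ x y : W, Bq x y = polar q (x:V) (y:V) := fun x y => rfl
  have hBpapp : ∀ x y : W, Bp x y = polar p (x:V) (y:V) := fun x y => rfl
  have hnd : Bq.Nondegenerate := by
    refine ⟨fun x hx => ?_, fun x hx => ?_⟩
    all_goals
      have := hx x
      rw [hBqapp] at this
      by_contra hx0
      have hxV : (x : V) ≠ 0 := fun h => hx0 (Subtype.ext h)
      rw [show polar q (x:V) (x:V) = 2 • q (x:V) from polar_self _ _] at this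
      simp only [nsmul_eq_mul, Nat.cast_ofNat] at this
      have := hWqpos x hxV
      linarith
  set T : W →ₗ[ℝ] W := (Bq.toDual hnd).symm.toLinearMap ∘ₗ (Bp : W →ₗ[ℝ] Module.Dual ℝ W) with hT
  have hTkey : ∀ x y : W, Bq (T x) y = Bp x y := by
    intro x y
    rw [hT]
    simp only [LinearMap.coe_comp, Function.comp_apply, LinearEquiv.coe_coe]
    exact LinearMap.BilinForm.apply_toDual_symm_apply (B := Bq) (hB := hnd) _ _
  have hTsymm : T.IsSymmetric := by
    intro x y
    rw [hinner, hinner]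
    have h1 := hTkey x y
    have h2 := hTkey y x
    rw [hBqapp, hBpapp] at h1 h2
    rw [h1]
    rw [polar_comm (⇑q) (x:V) ((T y : W) : V), h2, polar_comm]
  -- eigenbasis of T on W
  set m := Module.finrank ℝ W with hm
  set bw : OrthonormalBasis (Fin m) ℝ W := hTsymm.eigenvectorBasis rfl with hbw
  have hqorthW : ∀ i j : Fin m, i ≠ j → polar (⇑q) ((bw i : W) : V) ((bw j : W) : V) = 0 := by
    intro i j hij
    have h0 : (inner ℝ (bw i) (bw j) : ℝ) = 0 := bw.orthonormal.2 hij
    rw [hinner] at h0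
    linarith
  have hporthW : ∀ i j : Fin m, i ≠ j → polar (⇑p) ((bw i : W) : V) ((bw j : W) : V) = 0 := by
    intro i j hij
    have h1 := hTkey (bw i) (bw j)
    rw [hTsymm.apply_eigenvectorBasis rfl i] at h1
    rw [_root_.map_smul, LinearMap.smul_apply, smul_eq_mul] at h1
    rw [hBqapp, hBpapp, hqorthW i j hij, mul_zero] at h1
    exact h1.symm
  -- dimension count
  have hφv₀ : φ v₀ ≠ 0 := by
    rw [hφapp, polar_self]
    simp only [nsmul_eq_mul, Nat.cast_ofNat]
    intro h; nlinarith
  have hrange : LinearMap.range φ = ⊤ := by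
    rw [LinearMap.range_eq_top]
    intro c
    exact ⟨(c / φ v₀) • v₀, by rw [_root_.map_smul, smul_eq_mul]; field_simp⟩
  have hdim : m + 1 = n := by
    have h2 := LinearMap.finrank_range_add_finrank_ker φ
    rw [hrange, finrank_top, finrank_self] at h2
    rw [hm, hn, hW]
    omega
  -- the final family
  set fam : Fin (m + 1) → V := Fin.cons v₀ (fun j => ((bw j : W) : V)) with hfam
  set v : Fin n → V := fun i => fam (Fin.cast hdim.symm i) with hv
  have hfam_range : Set.range fam ⊆ Set.range v := by
    rintro x ⟨i, hi⟩
    refine ⟨Fin.cast hdim i, ?_⟩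
    rw [hv]; simp only
    rw [show Fin.cast hdim.symm (Fin.cast hdim i) = i by ext; simp]
    exact hi
  have hspan : ⊤ ≤ Submodule.span ℝ (Set.range v) := by
    intro x _
    set c := φ x / φ v₀ with hc
    have hwmem : x - c • v₀ ∈ W := by
      rw [hW, LinearMap.mem_ker, _root_.map_sub, _root_.map_smul, smul_eq_mul, hc]
      field_simp
      simp
    have h1 : (⟨x - c • v₀, hwmem⟩ : W) ∈ Submodule.span ℝ (Set.range ⇑bw.toBasis) :=
      Basis.mem_span _ _
    have h2 : x - c • v₀ ∈ Submodule.span ℝ (⇑W.subtype '' Set.range ⇑bw) := by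
      have h3 := Submodule.mem_map_of_mem (f := W.subtype) h1
      rw [Submodule.map_span, bw.coe_toBasis] at h3
      exact h3
    rw [← Set.range_comp] at h2
    have hsub : Set.range (⇑W.subtype ∘ ⇑bw) ⊆ Set.range v := by
      rintro y ⟨j, hj⟩
      apply hfam_range
      refine ⟨j.succ, ?_⟩
      rw [hfam, Fin.cons_succ]
      exact hj
    have hv₀ : v₀ ∈ Set.range v := hfam_range ⟨0, by rw [hfam, Fin.cons_zero]⟩
    have hmem1 : c • v₀ ∈ Submodule.span ℝ (Set.range v) :=
      Submodule.smul_mem _ c (Submodule.subset_span hv₀)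
    have hmem2 : x - c • v₀ ∈ Submodule.span ℝ (Set.range v) :=
      Submodule.span_mono hsub h2
    have := Submodule.add_mem _ hmem1 hmem2
    simpa using this
  have hcard : Fintype.card (Fin n) = finrank ℝ V := by rw [Fintype.card_fin, hn]
  refine ⟨basisOfTopLeSpanOfCardEqFinrank v hspan hcard, fun i j hij => ?_⟩
  rw [coe_basisOfTopLeSpanOfCardEqFinrank]
  -- orthogonality for the family
  have hfamorth : ∀ i j : Fin (m + 1), i ≠ j →
      polar (⇑p) (fam i) (fam j) = 0 ∧ polar (⇑q) (fam i) (fam j) = 0 := by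
    intro i j hij
    induction i using Fin.cases with
    | zero =>
      induction j using Fin.cases with
      | zero => exact absurd rfl hij
      | succ j' =>
        rw [hfam]
        simp only [Fin.cons_zero, Fin.cons_succ]
        exact ⟨hWp _, hWq _⟩
    | succ i' =>
      induction j using Fin.cases with
      | zero =>
        rw [hfam]
        simp only [Fin.cons_zero, Fin.cons_succ]
        rw [polar_comm (⇑p), polar_comm (⇑q)]
        exact ⟨hWp _, hWq _⟩
      | succ j' =>
        have hij' : i' ≠ j' := fun h => hij (by rw [h])
        rw [hfam]
        simp only [Fin.cons_succ]
        exact ⟨hporthW _ _ hij', hqorthW _ _ hij'⟩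
  have hij' : Fin.cast hdim.symm i ≠ Fin.cast hdim.symm j := by
    intro h
    apply hij
    have := congrArg (Fin.cast hdim) h
    simpa [Fin.ext_iff] using this
  exact hfamorth _ _ hij'
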